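/- For ő≤ < 0, x ‚Č• 0 and t > 0, the quantity J(ő≤,x,t) = (1/‚ąö(2ŌÄt)) ‚ąę_0^‚ąě (exp(-(x-y)¬≤/(2t)) - exp(-(x+y)¬≤/(2t))) e^{ő≤y} dy satisfies |J(ő≤,x,t) - ‚ąö(2/(ŌÄt¬≥)) x/ő≤¬≤| ‚Č§ C(x) t^{-5/2} for some constant C(x) depending only on x (and ő≤), so that J(ő≤,x,t) ~ ‚ąö(2/(ŌÄt¬≥)) x/ő≤¬≤ as t ‚Üí ‚ąě. -/

import Mathlib

open MeasureTheory Real Set Filter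

/-- `J(β,x,t) = (1/√(2πt)) ∫_0^∞ (exp(-(x-y)²/(2t)) - exp(-(x+y)²/(2t))) e^{βy} dy`. -/
noncomputable def J (β x t : ℝ) : ℝ :=
  (Real.sqrt (2 * π * t))⁻¹ *
    ∫ y in Ioi (0:ℝ),
      (Real.exp (-(x - y)^2 / (2*t)) - Real.exp (-(x + y)^2 / (2*t))) * Real.exp (β * y)

lemma exp_neg_bounds (w : ℝ) (hw : 0 ≤ w) :
    1 - w ≤ Real.exp (-w) ∧ Real.exp (-w) ≤ 1 - w + w^2 := by
  constructor
  · have := Real.add_one_le_exp (-w); linarith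
  · have h1 : 1 + w ≤ Real.exp w := by linarith [Real.add_one_le_exp w]
    have h0 : (0:ℝ) < 1 + w := by linarith
    have h2 : (Real.exp w)⁻¹ ≤ (1 + w)⁻¹ := by
      apply inv_anti₀ h0 h1
    rw [Real.exp_neg]
    have h3 : (1 + w)⁻¹ ≤ 1 - w + w^2 := by
      rw [inv_le_iff_one_le_mul₀ h0]
      nlinarith [pow_nonneg hw 3]
    linarith

lemma key_est (x y t : ℝ) (ht : 0 < t) :
    |(Real.exp (-(x - y)^2 / (2*t)) - Real.exp (-(x + y)^2 / (2*t))) - 2*x*y/t|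
      ≤ (16*x^4 + 16*y^4) / (4*t^2) := by
  set u := (x - y)^2 / (2*t) with hu
  set v := (x + y)^2 / (2*t) with hv
  have hu0 : 0 ≤ u := by positivity
  have hv0 : 0 ≤ v := by positivity
  obtain ⟨e1, e2⟩ := exp_neg_bounds u hu0
  obtain ⟨e3, e4⟩ := exp_neg_bounds v hv0
  have hru : -(x - y)^2 / (2*t) = -u := by rw [hu]; ring
  have hrv : -(x + y)^2 / (2*t) = -v := by rw [hv]; ring
  have huv : v - u = 2*x*y/t := by rw [hu, hv]; field_simp; ring
  have hu2 : u^2 = (x-y)^4 / (4*t^2) := by rw [hu]; field_simp; ring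
  have hv2 : v^2 = (x+y)^4 / (4*t^2) := by rw [hv]; field_simp; ring
  have h6 : (x-y)^4 / (4*t^2) ≤ (16*x^4 + 16*y^4) / (4*t^2) := by
    apply div_le_div_of_nonneg_right ?_ (by positivity)
    nlinarith [sq_nonneg (x*y), sq_nonneg (x+y), sq_nonneg (x-y), sq_nonneg (x^2 - y^2)]
  have h7 : (x+y)^4 / (4*t^2) ≤ (16*x^4 + 16*y^4) / (4*t^2) := by
    apply div_le_div_of_nonneg_right ?_ (by positivity)
    nlinarith [sq_nonneg (x*y), sq_nonneg (x+y), sq_nonneg (x-y), sq_nonneg (x^2 - y^2)]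
  rw [hru, hrv, abs_le]
  constructor
  · linarith
  · linarith

lemma int_pow_exp (β : ℝ) (hβ : β < 0) (n : ℕ) :
    IntegrableOn (fun y : ℝ => y ^ n * Real.exp (β * y)) (Ioi 0) := by
  have hb : (0:ℝ) < -β := by linarith
  have h := integrableOn_rpow_mul_exp_neg_mul_rpow (s := (n:ℝ)) (p := 1)
    (by exact_mod_cast neg_one_lt_zero.trans_le (Nat.cast_nonneg n)) one_pos hb
  have he : (fun y : ℝ => y ^ ((n:ℝ)) * Real.exp (-(-β) * y ^ (1:ℝ)))
      = fun y : ℝ => y ^ n * Real.exp (β * y) := by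
    funext y
    rw [Real.rpow_natCast, Real.rpow_one, neg_neg]
  rwa [he] at h

lemma int_y_exp_val (β : ℝ) (hβ : β < 0) :
    ∫ y in Ioi (0:ℝ), y * Real.exp (β * y) = 1 / β ^ 2 := by
  have hb : (0:ℝ) < -β := by linarith
  have h := Real.integral_rpow_mul_exp_neg_mul_Ioi (a := 2) (r := -β) two_pos hb
  simp only [show (2:ℝ) - 1 = 1 by norm_num, Real.rpow_one, neg_mul, neg_neg] at h
  rw [h, Real.Gamma_two, mul_one, show (2:ℝ) = ((2:ℕ):ℝ) by norm_num, Real.rpow_natCast,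
    div_pow, one_pow, neg_pow, Even.neg_one_pow (by norm_num)]
  ring

/-- For `β < 0` and `x ≥ 0`, `|J(β,x,t) - √(2/(πt³)) x/β²| ≤ C(x) t^{-5/2}` for some constant
`C(x)` depending only on `x` (and `β`), so that `J(β,x,t) ~ √(2/(πt³)) x/β²` as `t → ∞`. -/
theorem stmt_3 (β x : ℝ) (hβ : β < 0) (hx : 0 ≤ x) :
    ∃ C : ℝ, (∀ t : ℝ, 0 < t →
        |J β x t - Real.sqrt (2 / (π * t^3)) * (x / β^2)| ≤ C * t ^ (-(5:ℝ)/2)) ∧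
      Asymptotics.IsEquivalent atTop (fun t => J β x t) (fun t => Real.sqrt (2 / (π * t^3)) * (x / β^2)) := by
  have hb : (0:ℝ) < -β := by linarith
  set K : ℝ := ∫ y in Ioi (0:ℝ), (16*x^4 + 16*y^4) * Real.exp (β*y) with hKdef
  have hKint : IntegrableOn (fun y : ℝ => (16*x^4 + 16*y^4) * Real.exp (β*y)) (Ioi 0) := by
    have h0 := ((int_pow_exp β hβ 0).const_mul (16*x^4)).add ((int_pow_exp β hβ 4).const_mul 16)
    refine MeasureTheory.IntegrableOn.congr_fun h0 (fun y _ => ?_) measurableSet_Ioi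
    simp only [Pi.add_apply, pow_zero, one_mul]; ring
  have hK0 : 0 ≤ K := setIntegral_nonneg measurableSet_Ioi (fun y _ => by positivity)
  set C : ℝ := (Real.sqrt (2*π))⁻¹ * K / 4 with hCdef
  have hC0 : 0 ≤ C := by
    apply div_nonneg (mul_nonneg (by positivity) hK0) (by norm_num)
  have hbound : ∀ t : ℝ, 0 < t →
      |J β x t - Real.sqrt (2 / (π * t^3)) * (x / β^2)| ≤ C * t ^ (-(5:ℝ)/2) := by
    intro t ht
    have hsq : 0 < Real.sqrt (2*π*t) := Real.sqrt_pos.mpr (by positivity)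
    have hInt1 : IntegrableOn (fun y : ℝ =>
        (Real.exp (-(x - y)^2 / (2*t)) - Real.exp (-(x + y)^2 / (2*t))) * Real.exp (β * y))
        (Ioi 0) := by
      refine Integrable.mono (exp_neg_integrableOn_Ioi 0 hb)
        ((Continuous.aestronglyMeasurable (by continuity)).restrict)
        (Filter.Eventually.of_forall fun y => ?_)
      rw [Real.norm_eq_abs, Real.norm_eq_abs, abs_mul, Real.abs_exp, Real.abs_exp, neg_neg]
      have h1 : Real.exp (-(x - y)^2 / (2*t)) ≤ 1 := by
        rw [Real.exp_le_one_iff]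
        apply div_nonpos_of_nonpos_of_nonneg (neg_nonpos.mpr (sq_nonneg _)) (by positivity)
      have h2 : Real.exp (-(x + y)^2 / (2*t)) ≤ 1 := by
        rw [Real.exp_le_one_iff]
        apply div_nonpos_of_nonpos_of_nonneg (neg_nonpos.mpr (sq_nonneg _)) (by positivity)
      have h3 := Real.exp_pos (-(x - y)^2 / (2*t))
      have h4 := Real.exp_pos (-(x + y)^2 / (2*t))
      have h5 : |Real.exp (-(x - y)^2 / (2*t)) - Real.exp (-(x + y)^2 / (2*t))| ≤ 1 := by
        rw [abs_le]; constructor <;> linarith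
      calc |Real.exp (-(x - y)^2 / (2*t)) - Real.exp (-(x + y)^2 / (2*t))| * Real.exp (β*y)
          ≤ 1 * Real.exp (β*y) := mul_le_mul_of_nonneg_right h5 (Real.exp_pos _).le
        _ = Real.exp (β*y) := one_mul _
    have hIy : IntegrableOn (fun y : ℝ => y * Real.exp (β*y)) (Ioi 0) :=
      (int_pow_exp β hβ 1).congr_fun (fun y _ => by simp only [pow_one]) measurableSet_Ioi
    have hInt2 : IntegrableOn (fun y : ℝ => (2*x/t) * (y * Real.exp (β*y))) (Ioi 0) :=
      hIy.const_mul _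
    have hh := hInt1.sub hInt2
    have hptw : ∀ y ∈ Ioi (0:ℝ),
        |(Real.exp (-(x - y)^2 / (2*t)) - Real.exp (-(x + y)^2 / (2*t))) * Real.exp (β * y)
          - (2*x/t) * (y * Real.exp (β*y))|
        ≤ (4*t^2)⁻¹ * ((16*x^4 + 16*y^4) * Real.exp (β*y)) := by
      intro y _
      have hk := key_est x y t ht
      have heq : (Real.exp (-(x - y)^2 / (2*t)) - Real.exp (-(x + y)^2 / (2*t))) * Real.exp (β * y)
          - (2*x/t) * (y * Real.exp (β*y))
          = ((Real.exp (-(x - y)^2 / (2*t)) - Real.exp (-(x + y)^2 / (2*t))) - 2*x*y/t)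
            * Real.exp (β*y) := by ring
      rw [heq, abs_mul, Real.abs_exp]
      calc |(Real.exp (-(x - y)^2 / (2*t)) - Real.exp (-(x + y)^2 / (2*t))) - 2*x*y/t|
            * Real.exp (β*y)
          ≤ ((16*x^4 + 16*y^4) / (4*t^2)) * Real.exp (β*y) :=
            mul_le_mul_of_nonneg_right hk (Real.exp_pos _).le
        _ = (4*t^2)⁻¹ * ((16*x^4 + 16*y^4) * Real.exp (β*y)) := by ring
    have hIb : (∫ y in Ioi (0:ℝ),
        |(Real.exp (-(x - y)^2 / (2*t)) - Real.exp (-(x + y)^2 / (2*t))) * Real.exp (β * y)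
          - (2*x/t) * (y * Real.exp (β*y))|)
        ≤ (4*t^2)⁻¹ * K := by
      have := setIntegral_mono_on hh.abs (hKint.const_mul ((4*t^2)⁻¹)) measurableSet_Ioi hptw
      rwa [integral_const_mul] at this
    have hgid : Real.sqrt (2 / (π * t^3)) * (x / β^2)
        = (Real.sqrt (2*π*t))⁻¹ * ((2*x/t) * (1/β^2)) := by
      have hs1 : Real.sqrt (2*π*t) * Real.sqrt (2/(π*t^3)) = 2/t := by
        rw [← Real.sqrt_mul (by positivity),
          show (2*π*t) * (2/(π*t^3)) = (2/t)^2 by field_simp]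
        exact Real.sqrt_sq (by positivity)
      rw [inv_mul_eq_div, eq_div_iff hsq.ne']
      linear_combination (x/β^2) * hs1
    have hJg : J β x t - Real.sqrt (2 / (π * t^3)) * (x / β^2)
        = (Real.sqrt (2*π*t))⁻¹ * (∫ y in Ioi (0:ℝ),
          ((Real.exp (-(x - y)^2 / (2*t)) - Real.exp (-(x + y)^2 / (2*t))) * Real.exp (β * y)
            - (2*x/t) * (y * Real.exp (β*y)))) := by
      rw [integral_sub hInt1 hInt2, integral_const_mul, int_y_exp_val β hβ, hgid]
      simp only [J]
      ring
    rw [hJg, abs_mul, abs_of_nonneg (inv_nonneg.mpr (Real.sqrt_nonneg _))]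
    calc (Real.sqrt (2*π*t))⁻¹ * |∫ y in Ioi (0:ℝ),
          ((Real.exp (-(x - y)^2 / (2*t)) - Real.exp (-(x + y)^2 / (2*t))) * Real.exp (β * y)
            - (2*x/t) * (y * Real.exp (β*y)))|
        ≤ (Real.sqrt (2*π*t))⁻¹ * ((4*t^2)⁻¹ * K) := by
          apply mul_le_mul_of_nonneg_left _ (inv_nonneg.mpr (Real.sqrt_nonneg _))
          refine le_trans ?_ hIb
          simpa [Real.norm_eq_abs] using
            MeasureTheory.norm_integral_le_integral_norm (μ := volume.restrict (Ioi 0))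
              (fun y : ℝ =>
                (Real.exp (-(x - y)^2 / (2*t)) - Real.exp (-(x + y)^2 / (2*t))) * Real.exp (β * y)
                  - (2*x/t) * (y * Real.exp (β*y)))
      _ = C * t ^ (-(5:ℝ)/2) := by
          have hpow : t ^ (-(5:ℝ)/2) = (Real.sqrt t)⁻¹ * (t^2)⁻¹ := by
            rw [Real.sqrt_eq_rpow, ← Real.rpow_natCast t 2, ← Real.rpow_neg ht.le,
              ← Real.rpow_neg ht.le, ← Real.rpow_add ht]
            norm_num
          rw [Real.sqrt_mul (by positivity : (0:ℝ) ≤ 2*π) t, mul_inv, hpow, hCdef]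
          ring
  refine ⟨C, hbound, ?_⟩
  rcases eq_or_lt_of_le hx with hx0 | hx0
  · subst hx0
    have hz : (fun t => J β 0 t) = (fun t : ℝ => Real.sqrt (2 / (π * t^3)) * (0 / β^2)) := by
      funext t
      simp [J]
    rw [hz]
  · rw [Asymptotics.IsEquivalent, Asymptotics.isLittleO_iff]
    intro ε hε
    have hc0 : 0 < Real.sqrt (2/π) * (x/β^2) :=
      mul_pos (Real.sqrt_pos.mpr (by positivity)) (div_pos hx0 (by nlinarith))
    set c₀ : ℝ := Real.sqrt (2/π) * (x/β^2) with hc₀def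
    have hεc : 0 < ε * c₀ := mul_pos hε hc0
    filter_upwards [Filter.eventually_ge_atTop (max 1 (C / (ε * c₀)))] with t ht
    have ht1 : (1:ℝ) ≤ t := le_trans (le_max_left _ _) ht
    have ht0 : (0:ℝ) < t := lt_of_lt_of_le one_pos ht1
    have ht2 : C / (ε*c₀) ≤ t := le_trans (le_max_right _ _) ht
    have hgt : Real.sqrt (2 / (π * t^3)) = Real.sqrt (2/π) * t ^ (-(3:ℝ)/2) := by
      rw [show 2/(π*t^3) = (2/π) * (t^3)⁻¹ by ring,
        Real.sqrt_mul (by positivity : (0:ℝ) ≤ 2/π)]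
      congr 1
      rw [show ((t^3)⁻¹ : ℝ) = t ^ ((-3 : ℝ)) by
          rw [show ((-3:ℝ)) = -((3:ℕ):ℝ) by norm_num, Real.rpow_neg ht0.le, Real.rpow_natCast],
        Real.sqrt_eq_rpow, ← Real.rpow_mul ht0.le]
      norm_num
    have hgnn : (0:ℝ) ≤ Real.sqrt (2 / (π * t^3)) * (x / β^2) :=
      mul_nonneg (Real.sqrt_nonneg _) (div_nonneg hx (sq_nonneg β))
    have h1 : t⁻¹ = t ^ (-1:ℝ) := by rw [Real.rpow_neg_one]
    have hpows : t ^ (-(5:ℝ)/2) = t⁻¹ * t ^ (-(3:ℝ)/2) := by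
      rw [h1, ← Real.rpow_add ht0]; norm_num
    have hfrac : C / t ≤ ε * c₀ := by
      rw [div_le_iff₀ ht0]
      have := (div_le_iff₀ hεc).mp ht2
      nlinarith
    have hgeq : Real.sqrt (2 / (π * t^3)) * (x / β^2) = c₀ * t ^ (-(3:ℝ)/2) := by
      rw [hgt, hc₀def]; ring
    have key : |J β x t - Real.sqrt (2 / (π * t^3)) * (x / β^2)|
        ≤ ε * (Real.sqrt (2 / (π * t^3)) * (x / β^2)) := by
      rw [hgeq]
      calc |J β x t - c₀ * t ^ (-(3:ℝ)/2)|
          = |J β x t - Real.sqrt (2 / (π * t^3)) * (x / β^2)| := by rw [hgeq]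
        _ ≤ C * t ^ (-(5:ℝ)/2) := hbound t ht0
        _ = (C/t) * t ^ (-(3:ℝ)/2) := by rw [hpows]; ring
        _ ≤ (ε*c₀) * t ^ (-(3:ℝ)/2) :=
            mul_le_mul_of_nonneg_right hfrac (Real.rpow_nonneg ht0.le _)
        _ = ε * (c₀ * t ^ (-(3:ℝ)/2)) := by ring
    simp only [Pi.sub_apply]
    rw [Real.norm_eq_abs, Real.norm_eq_abs, abs_of_nonneg hgnn]
    exact key
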